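/- Let F be an infinite field of characteristic different from 2 and let A = M_n(F) carry an elementary grading by a group G. Let f(x_{1,g_1},…,x_{r,g_r}) and g(x_{r+1,g_{r+1}},…,x_{s,g_s}) be polynomials in disjoint sets of variables such that f·g is a graded central polynomial for A. Then there exists an invertible diagonal matrix P ∈ M_n(F) such that the result of every f-admissible substitution is a scalar multiple of P and the result of every g-admissible substitution is a scalar multiple of P^{-1}. -/

import Mathlib

section GradedDefs

variable {F : Type*} [Field F] {G : Type*} [Group G] {A : Type*} [Ring A] [Algebra F A]

/-- An internal algebra grading of `A` by the group `G`: the components are independent,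
span `A`, and multiply according to the group operation. -/
structure IsAlgGrading [DecidableEq G] (𝒜 : G → Submodule F A) : Prop where
  internal : DirectSum.IsInternal 𝒜
  mul_mem : ∀ {g h : G} {x y : A}, x ∈ 𝒜 g → y ∈ 𝒜 h → x * y ∈ 𝒜 (g * h)

/-- An admissible (graded) substitution: the variable `x_{i,g}` is replaced by an element
of the homogeneous component of degree `g`. -/
def GradedSubst (𝒜 : G → Submodule F A) (a : ℕ × G → A) : Prop := ∀ p : ℕ × G, a p ∈ 𝒜 p.2

/-- `f` is a graded polynomial identity. -/
def IsGradedIdentity (𝒜 : G → Submodule F A) (f : FreeAlgebra F (ℕ × G)) : Prop :=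
  ∀ a : ℕ × G → A, GradedSubst 𝒜 a → FreeAlgebra.lift F a f = 0

/-- `f` is a graded central polynomial. -/
def IsGradedCentral (𝒜 : G → Submodule F A) (f : FreeAlgebra F (ℕ × G)) : Prop :=
  ¬ IsGradedIdentity 𝒜 f ∧
    ∀ a : ℕ × G → A, GradedSubst 𝒜 a → FreeAlgebra.lift F a f ∈ Set.center A

/-- `f` only uses (graded) variables from the set `S`. -/
def UsesVars (S : Set (ℕ × G)) (f : FreeAlgebra F (ℕ × G)) : Prop :=
  f ∈ Algebra.adjoin F (FreeAlgebra.ι F '' S)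

/-- The primeness property for graded central polynomials: if a product of two polynomials
in disjoint sets of variables is graded central, then both factors are graded central. -/
def HasGradedPrimeness (𝒜 : G → Submodule F A) : Prop :=
  ∀ (S T : Set (ℕ × G)) (f g : FreeAlgebra F (ℕ × G)),
    Disjoint S T → UsesVars S f → UsesVars T g →
    IsGradedCentral 𝒜 (f * g) →
    IsGradedCentral 𝒜 f ∧ IsGradedCentral 𝒜 g

end GradedDefs

section Elementary

variable (F : Type*) [Field F] {G : Type*} [Group G] {n : ℕ}

/-- The homogeneous component of degree `x` of the elementary grading of `Mₙ(F)`
induced by the tuple `v`: it is spanned by the matrix units `E i j` with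
`(v i)⁻¹ * v j = x`. -/
def elemComp (v : Fin n → G) (x : G) : Submodule F (Matrix (Fin n) (Fin n) F) where
  carrier := {M | ∀ i j, (v i)⁻¹ * v j ≠ x → M i j = 0}
  add_mem' := by
    intro M N hM hN i j h
    simp [Matrix.add_apply, hM i j h, hN i j h]
  zero_mem' := by intro i j _; simp
  smul_mem' := by
    intro c M hM i j h
    simp [Matrix.smul_apply, hM i j h]

/-- The subgroup of permutations `σ` of `{1,…,n}` for which the automorphism `Λ_σ`
(which sends `E i j` to `E (σ i) (σ j)`) is a graded automorphism. -/
def GradedPerms (v : Fin n → G) : Subgroup (Equiv.Perm (Fin n)) where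
  carrier := {σ | ∀ i j, (v (σ i))⁻¹ * v (σ j) = (v i)⁻¹ * v j}
  one_mem' := by intro i j; simp
  mul_mem' := by
    intro σ τ hσ hτ i j
    simpa [Equiv.Perm.mul_apply] using (hσ (τ i) (τ j)).trans (hτ i j)
  inv_mem' := by
    intro σ hσ i j
    simpa using (hσ (σ⁻¹ i) (σ⁻¹ j)).symm

/-- The automorphism `Λ_σ` of the matrix algebra, determined by
`Λ_σ (E i j) = E (σ i) (σ j)`. -/
def permConj (σ : Equiv.Perm (Fin n)) (M : Matrix (Fin n) (Fin n) F) :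
    Matrix (Fin n) (Fin n) F :=
  M.submatrix ⇑σ.symm ⇑σ.symm

end Elementary


section Helpers

variable {F : Type*} [Field F] {G : Type*} [Group G]
variable {A : Type*} [Ring A] [Algebra F A]

theorem myLiftEqOn {S : Set (ℕ × G)} {f : FreeAlgebra F (ℕ × G)}
    (hf : f ∈ Algebra.adjoin F (FreeAlgebra.ι F '' S)) {a b : ℕ × G → A}
    (h : ∀ p ∈ S, a p = b p) :
    FreeAlgebra.lift F a f = FreeAlgebra.lift F b f := by
  induction hf using Algebra.adjoin_induction with
  | mem x hx => obtain ⟨p, hp, rfl⟩ := hx; simp [FreeAlgebra.lift_ι_apply, h p hp]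
  | algebraMap r => simp [AlgHom.commutes]
  | add x y hx hy ihx ihy => simp [map_add, ihx, ihy]
  | mul x y hx hy ihx ihy => simp [map_mul, ihx, ihy]

theorem myLiftComp (φ : A →ₐ[F] A) (a : ℕ × G → A) (f : FreeAlgebra F (ℕ × G)) :
    FreeAlgebra.lift F (fun p => φ (a p)) f = φ (FreeAlgebra.lift F a f) := by
  have : FreeAlgebra.lift F (fun p => φ (a p)) = φ.comp (FreeAlgebra.lift F a) := by
    apply FreeAlgebra.hom_ext
    funext p
    simp [FreeAlgebra.lift_ι_apply]
  rw [this]; rfl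

end Helpers

section MatrixHelpers

variable {F : Type*} [Field F] {n : ℕ}

/-- conjugation by a pair of mutually inverse matrices, as an algebra hom -/
def myConj (D D' : Matrix (Fin n) (Fin n) F) (h1 : D * D' = 1) (h2 : D' * D = 1) :
    Matrix (Fin n) (Fin n) F →ₐ[F] Matrix (Fin n) (Fin n) F where
  toFun x := D * x * D'
  map_one' := by show D * 1 * D' = 1; rw [mul_one, h1]
  map_mul' x y := by
    show D * (x * y) * D' = (D * x * D') * (D * y * D')
    simp only [mul_assoc]
    rw [← mul_assoc D' D (y * D'), h2, one_mul]
  map_zero' := by show D * 0 * D' = 0; simp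
  map_add' x y := by
    show D * (x + y) * D' = D * x * D' + D * y * D'
    rw [mul_add, add_mul]
  commutes' r := by
    show D * (algebraMap F _ r) * D' = algebraMap F _ r
    rw [Algebra.algebraMap_eq_smul_one, mul_smul_comm, smul_mul_assoc, mul_one, h1]

theorem myCenterScalar [Nonempty (Fin n)] {M : Matrix (Fin n) (Fin n) F}
    (h : M ∈ Set.center (Matrix (Fin n) (Fin n) F)) :
    ∃ r : F, M = r • (1 : Matrix (Fin n) (Fin n) F) := by
  have := Matrix.mem_range_scalar_of_commute_single
    (M := M) (fun i j _ => ((Set.mem_center_iff.mp h).comm _).symm)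
  obtain ⟨r, hr⟩ := this
  refine ⟨r, ?_⟩
  rw [← hr]
  ext i j
  simp only [Matrix.scalar_apply, Matrix.smul_apply, Matrix.one_apply, Matrix.diagonal_apply]
  split <;> simp

theorem myExistsT [Infinite F] (n : ℕ) :
    ∃ t : F, t ≠ 0 ∧ ∀ m : ℕ, 1 ≤ m → m ≤ 2 * n → t ^ m ≠ 1 := by
  classical
  obtain ⟨t, ht⟩ := Infinite.exists_notMem_finset
    (insert (0 : F) ((Finset.Icc 1 (2 * n)).biUnion
      (fun m => (Polynomial.nthRoots m (1 : F)).toFinset)))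
  simp only [Finset.mem_insert, Finset.mem_biUnion, Finset.mem_Icc,
    Multiset.mem_toFinset, not_or, not_exists, not_and] at ht
  refine ⟨t, ht.1, fun m h1 h2 hm => ?_⟩
  exact ht.2 m ⟨h1, h2⟩ ((Polynomial.mem_nthRoots h1).mpr hm)

theorem myRowNonzero {u : Matrix (Fin n) (Fin n) F} (hu : IsUnit u) (i : Fin n) :
    ∃ j, u i j ≠ 0 := by
  obtain ⟨w, hw⟩ := hu.exists_right_inv
  by_contra h
  push_neg at h
  have : (u * w) i i = 0 := by simp [Matrix.mul_apply, h]
  rw [hw] at this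
  simp [Matrix.one_apply] at this

theorem myColNonzero {u : Matrix (Fin n) (Fin n) F} (hu : IsUnit u) (j : Fin n) :
    ∃ i, u i j ≠ 0 := by
  obtain ⟨w, hw⟩ := hu.exists_right_inv
  rw [mul_eq_one_comm] at hw
  by_contra h
  push_neg at h
  have : (w * u) j j = 0 := by simp [Matrix.mul_apply, h]
  rw [hw] at this
  simp [Matrix.one_apply] at this

theorem myDiagOfStripe {u : Matrix (Fin n) (Fin n) F} (hu : IsUnit u) {t : F}
    (ht0 : t ≠ 0) (ht : ∀ m : ℕ, 1 ≤ m → m ≤ 2 * n → t ^ m ≠ 1) {c : F}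
    (hs : ∀ i j, u i j ≠ 0 → t ^ (i : ℕ) = c * t ^ (j : ℕ)) :
    ∀ i j, i ≠ j → u i j = 0 := by
  have tpow : ∀ a b : ℕ, a ≤ 2 * n → b ≤ 2 * n → t ^ a = t ^ b → a = b := by
    intro a b ha hb hab
    by_contra hne
    rcases Nat.lt_or_ge a b with h | h
    · have : t ^ a * t ^ (b - a) = t ^ a * 1 := by
        rw [← pow_add, mul_one, Nat.add_sub_cancel' h.le]; exact hab.symm
      have := mul_left_cancel₀ (pow_ne_zero a ht0) this
      exact ht (b - a) (by omega) (by omega) this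
    · have hlt : b < a := lt_of_le_of_ne h (Ne.symm hne)
      have : t ^ b * t ^ (a - b) = t ^ b * 1 := by
        rw [← pow_add, mul_one, Nat.add_sub_cancel' hlt.le]; exact hab
      have := mul_left_cancel₀ (pow_ne_zero b ht0) this
      exact ht (a - b) (by omega) (by omega) this
  have key : ∀ i j i' j' : Fin n, u i j ≠ 0 → u i' j' ≠ 0 →
      (i : ℕ) + (j' : ℕ) = (i' : ℕ) + (j : ℕ) := by
    intro i j i' j' h h'
    have e1 := hs i j h
    have e2 := hs i' j' h'
    have : t ^ ((i : ℕ) + (j' : ℕ)) = t ^ ((i' : ℕ) + (j : ℕ)) := by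
      rw [pow_add, pow_add, e1, e2]; ring
    exact tpow _ _ (by omega) (by omega) this
  intro i j hij
  by_contra h
  rcases Nat.lt_or_ge (i : ℕ) (j : ℕ) with hlt | hge
  · have hn : 0 < n := i.pos
    obtain ⟨i', hi'⟩ := myColNonzero hu (⟨0, hn⟩ : Fin n)
    have := key i j i' ⟨0, hn⟩ h hi'
    simp at this
    omega
  · have hlt : (j : ℕ) < (i : ℕ) := by
      rcases lt_of_le_of_ne hge (fun hh => hij (Fin.ext hh.symm)) with h'
      exact h'
    have hn : 0 < n := i.pos
    obtain ⟨j', hj'⟩ := myRowNonzero hu (⟨0, hn⟩ : Fin n)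
    have := key (⟨0, hn⟩ : Fin n) j' i j hj' h
    simp at this
    omega

end MatrixHelpers

/-- Let `A = Mₙ(F)` carry an elementary grading by a group `G` and let
`f`, `g` be polynomials in disjoint sets of variables whose product is a graded central
polynomial for `A`.  Then there is an invertible diagonal matrix `P` such that the
result of every `f`-admissible substitution is a scalar multiple of `P` and the result
of every `g`-admissible substitution is a scalar multiple of `P⁻¹`. -/
theorem scalar_multiple_of_central_product
    (F : Type*) [Field F] [Infinite F] (hchar : (2 : F) ≠ 0)
    {G : Type*} [Group G] {n : ℕ} (v : Fin n → G)
    (S T : Set (ℕ × G)) (f g : FreeAlgebra F (ℕ × G))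
    (hST : Disjoint S T) (hf : UsesVars S f) (hg : UsesVars T g)
    (hfg : IsGradedCentral (elemComp F v) (f * g)) :
    ∃ P : Matrix (Fin n) (Fin n) F, IsUnit P ∧ (∀ i j, i ≠ j → P i j = 0) ∧
      (∀ a : ℕ × G → Matrix (Fin n) (Fin n) F, GradedSubst (elemComp F v) a →
        ∃ c : F, FreeAlgebra.lift F a f = c • P) ∧
      (∀ a : ℕ × G → Matrix (Fin n) (Fin n) F, GradedSubst (elemComp F v) a →
        ∃ c : F, FreeAlgebra.lift F a g = c • P⁻¹) := by
  classical
  rcases Nat.eq_zero_or_pos n with hn | hn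
  · subst hn
    refine absurd (fun a _ => ?_) hfg.1
    ext i j
    exact i.elim0
  have hne : Nonempty (Fin n) := ⟨⟨0, hn⟩⟩
  have hni : ¬ IsGradedIdentity (elemComp F v) (f * g) := hfg.1
  simp only [IsGradedIdentity, not_forall] at hni
  obtain ⟨b, hb, hb0⟩ := hni
  set u := FreeAlgebra.lift F b f with hu_def
  set w := FreeAlgebra.lift F b g with hw_def
  obtain ⟨lam, hlam⟩ := myCenterScalar (hfg.2 b hb)
  rw [map_mul] at hlam hb0
  have hlam0 : lam ≠ 0 := by rintro rfl; rw [hlam, zero_smul] at hb0; exact hb0 rfl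
  set u' := lam⁻¹ • w with hu'_def
  have h1 : u * u' = 1 := by
    rw [hu'_def, mul_smul_comm, hlam, smul_smul, inv_mul_cancel₀ hlam0, one_smul]
  have h2 : u' * u = 1 := mul_eq_one_comm.mp h1
  have hUu : IsUnit u := IsUnit.of_mul_eq_one _ h1
  have hw_eq : w = lam • u' := by rw [hu'_def, smul_smul, mul_inv_cancel₀ hlam0, one_smul]
  have hfval : ∀ a, GradedSubst (elemComp F v) a →
      ∃ c : F, FreeAlgebra.lift F a f = c • u := by
    intro a ha
    set m : ℕ × G → Matrix (Fin n) (Fin n) F := fun p => if p ∈ S then a p else b p with hm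
    have hmsub : GradedSubst (elemComp F v) m := by
      intro p; by_cases hp : p ∈ S <;> simp only [hm, hp, if_true, if_false] <;>
        [exact ha p; exact hb p]
    have hmf : FreeAlgebra.lift F m f = FreeAlgebra.lift F a f :=
      myLiftEqOn hf (fun p hp => by simp [hm, hp])
    have hmg : FreeAlgebra.lift F m g = w :=
      myLiftEqOn hg (fun p hp => by simp [hm, Set.disjoint_right.mp hST hp])
    obtain ⟨μ, hμ⟩ := myCenterScalar (hfg.2 m hmsub)
    rw [map_mul, hmf, hmg] at hμ
    refine ⟨lam⁻¹ * μ, ?_⟩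
    have h3 := congrArg (· * u) hμ
    rw [mul_assoc, hw_eq, smul_mul_assoc, h2, smul_mul_assoc, one_mul,
      mul_smul_comm, mul_one] at h3
    rw [← smul_smul, ← h3, smul_smul, inv_mul_cancel₀ hlam0, one_smul]
  have hgval : ∀ a, GradedSubst (elemComp F v) a →
      ∃ c : F, FreeAlgebra.lift F a g = c • u' := by
    intro a ha
    set m : ℕ × G → Matrix (Fin n) (Fin n) F := fun p => if p ∈ T then a p else b p with hm
    have hmsub : GradedSubst (elemComp F v) m := by
      intro p; by_cases hp : p ∈ T <;> simp only [hm, hp, if_true, if_false] <;>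
        [exact ha p; exact hb p]
    have hmf : FreeAlgebra.lift F m f = u :=
      myLiftEqOn hf (fun p hp => by simp [hm, Set.disjoint_left.mp hST hp])
    have hmg : FreeAlgebra.lift F m g = FreeAlgebra.lift F a g :=
      myLiftEqOn hg (fun p hp => by simp [hm, hp])
    obtain ⟨ν, hν⟩ := myCenterScalar (hfg.2 m hmsub)
    rw [map_mul, hmf, hmg] at hν
    refine ⟨ν, ?_⟩
    have h3 := congrArg (u' * ·) hν
    rw [← mul_assoc, h2, one_mul, mul_smul_comm, mul_one] at h3
    exact h3
  obtain ⟨t, ht0, ht⟩ := myExistsT (F := F) n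
  set D := Matrix.diagonal (fun i : Fin n => t ^ (i : ℕ)) with hD
  set D' := Matrix.diagonal (fun i : Fin n => (t ^ (i : ℕ))⁻¹) with hD'
  have hDD' : D * D' = 1 := by
    rw [hD, hD', Matrix.diagonal_mul_diagonal]
    have : (fun i : Fin n => t ^ (i : ℕ) * (t ^ (i : ℕ))⁻¹) = fun _ => (1 : F) := by
      funext i; exact mul_inv_cancel₀ (pow_ne_zero _ ht0)
    rw [this, Matrix.diagonal_one]
  have hD'D : D' * D = 1 := by
    rw [hD, hD', Matrix.diagonal_mul_diagonal]
    have : (fun i : Fin n => (t ^ (i : ℕ))⁻¹ * t ^ (i : ℕ)) = fun _ => (1 : F) := by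
      funext i; exact inv_mul_cancel₀ (pow_ne_zero _ ht0)
    rw [this, Matrix.diagonal_one]
  have hconjentry : ∀ M : Matrix (Fin n) (Fin n) F, ∀ i j,
      (D * M * D') i j = t ^ (i : ℕ) * M i j * (t ^ (j : ℕ))⁻¹ := by
    intro M i j
    rw [hD, hD', Matrix.mul_diagonal, Matrix.diagonal_mul]
  have hconjsub : GradedSubst (elemComp F v)
      (fun p => myConj D D' hDD' hD'D (b p)) := by
    intro p i j hij
    show (D * b p * D') i j = 0
    rw [hconjentry, hb p i j hij, mul_zero, zero_mul]
  obtain ⟨c, hc⟩ := hfval _ hconjsub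
  rw [myLiftComp] at hc
  have hc' : D * u * D' = c • u := hc
  have hstripe : ∀ i j, u i j ≠ 0 → t ^ (i : ℕ) = c * t ^ (j : ℕ) := by
    intro i j hij
    have h4 := congrArg (fun M => M i j) hc'
    simp only [Matrix.smul_apply, smul_eq_mul] at h4
    rw [hconjentry] at h4
    have h5 : t ^ (i : ℕ) * u i j * (t ^ (j : ℕ))⁻¹ * t ^ (j : ℕ)
        = c * u i j * t ^ (j : ℕ) := by rw [h4]
    rw [mul_assoc (t ^ (i : ℕ) * u i j), inv_mul_cancel₀ (pow_ne_zero _ ht0),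
      mul_one] at h5
    have h6 : u i j * t ^ (i : ℕ) = u i j * (c * t ^ (j : ℕ)) := by
      rw [mul_comm (u i j)]; rw [h5]; ring
    exact mul_left_cancel₀ hij h6
  have hdiag := myDiagOfStripe hUu ht0 ht hstripe
  refine ⟨u, hUu, hdiag, hfval, ?_⟩
  rw [Matrix.inv_eq_right_inv h1]
  exact hgval
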